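/- Let G be a T1 almost paratopological semitopological group. Then Sym G = (G, 𝒯_Sym) is a Hausdorff quasitopological group: the topology 𝒯_Sym is Hausdorff, all left and right translations are 𝒯_Sym-continuous, and inversion is 𝒯_Sym-continuous. -/

import Mathlib

open Topology Pointwise

/-- A semitopological group `G` is almost paratopological if for every `g` with
`1 ∉ closure {g}` there is a neighborhood `U` of `1` with `g ∉ U * U`. -/
def IsAlmostParatopological (G : Type*) [Group G] [TopologicalSpace G] : Prop :=
  ∀ g : G, (1 : G) ∉ closure ({g} : Set G) → ∃ U ∈ nhds (1 : G), g ∉ U * U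

theorem sym_hausdorff_quasitopological {G : Type*} [Group G] [t : TopologicalSpace G]
    [T1Space G]
    (hl : ∀ g : G, Continuous fun x : G => g * x)
    (hr : ∀ g : G, Continuous fun x : G => x * g)
    (hG : IsAlmostParatopological G)
    (tSym : TopologicalSpace G)
    (hSym : ∀ s : Set G, IsOpen[tSym] s ↔
      ∃ U V : Set G, IsOpen[t] U ∧ IsOpen[t] V ∧ s = U ∩ V⁻¹) :
    @T2Space G tSym ∧
      (∀ g : G, Continuous[tSym, tSym] fun x : G => g * x) ∧
      (∀ g : G, Continuous[tSym, tSym] fun x : G => x * g) ∧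
      Continuous[tSym, tSym] fun x : G => x⁻¹ := by
  refine ⟨?_, ?_, ?_, ?_⟩
  · constructor
    intro x y hxy
    have hg : (1 : G) ∉ @closure G t ({x⁻¹ * y} : Set G) := by
      rw [@closure_singleton G t ‹_› _, Set.mem_singleton_iff]
      intro h
      exact hxy (inv_mul_eq_one.mp h.symm)
    obtain ⟨U, hU, hgU⟩ := hG _ hg
    obtain ⟨O, hOU, hO, h1O⟩ := (@mem_nhds_iff G t 1 U).mp hU
    refine ⟨((fun z => x⁻¹ * z) ⁻¹' O) ∩ ((fun z => z * x) ⁻¹' O)⁻¹,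
            ((fun z => y⁻¹ * z) ⁻¹' O) ∩ ((fun z => z * y) ⁻¹' O)⁻¹, ?_, ?_, ?_, ?_, ?_⟩
    · exact (hSym _).mpr ⟨_, _, @Continuous.isOpen_preimage G G t t _ (hl x⁻¹) O hO,
        @Continuous.isOpen_preimage G G t t _ (hr x) O hO, rfl⟩
    · exact (hSym _).mpr ⟨_, _, @Continuous.isOpen_preimage G G t t _ (hl y⁻¹) O hO,
        @Continuous.isOpen_preimage G G t t _ (hr y) O hO, rfl⟩
    · exact ⟨by simpa using h1O, by simp only [Set.mem_inv, Set.mem_preimage]; simpa using h1O⟩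
    · exact ⟨by simpa using h1O, by simp only [Set.mem_inv, Set.mem_preimage]; simpa using h1O⟩
    · rw [Set.disjoint_left]
      rintro z ⟨hz1, _⟩ ⟨_, hz2⟩
      have h2 : z⁻¹ * y ∈ O := by simpa [Set.mem_inv] using hz2
      have : (x⁻¹ * z) * (z⁻¹ * y) ∈ U * U :=
        Set.mul_mem_mul (hOU hz1) (hOU h2)
      apply hgU
      have e : (x⁻¹ * z) * (z⁻¹ * y) = x⁻¹ * y := by group
      rwa [e] at this
  · intro g
    rw [continuous_def]
    intro s hs
    obtain ⟨U, V, hU, hV, rfl⟩ := (hSym s).mp hs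
    refine (hSym _).mpr ⟨(fun z => g * z) ⁻¹' U, (fun z => z * g⁻¹) ⁻¹' V,
      @Continuous.isOpen_preimage G G t t _ (hl g) U hU, @Continuous.isOpen_preimage G G t t _ (hr g⁻¹) V hV, ?_⟩
    ext z
    simp [Set.mem_inv, mul_inv_rev]
  · intro g
    rw [continuous_def]
    intro s hs
    obtain ⟨U, V, hU, hV, rfl⟩ := (hSym s).mp hs
    refine (hSym _).mpr ⟨(fun z => z * g) ⁻¹' U, (fun z => g⁻¹ * z) ⁻¹' V,
      @Continuous.isOpen_preimage G G t t _ (hr g) U hU, @Continuous.isOpen_preimage G G t t _ (hl g⁻¹) V hV, ?_⟩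
    ext z
    simp [Set.mem_inv, mul_inv_rev]
  · rw [continuous_def]
    intro s hs
    obtain ⟨U, V, hU, hV, rfl⟩ := (hSym s).mp hs
    refine (hSym _).mpr ⟨V, U, hV, hU, ?_⟩
    ext z
    simp [Set.mem_inv, and_comm]
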